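/- Fix d ≥ 2, α ∈ (0,d], and m with 1 ≤ m ≤ d. Let K ⊂ ℝ^d be a compact smooth m-dimensional embedded submanifold of ℝ^d and let Q : ℝ^d → ℝ be continuously differentiable. For n ≥ 2 and points x_2,…,x_n ∈ K define f : ℝ^d → ℝ by f(y) = exp(−∑_{j=2}^n |y−x_j|^{−α} − 2nQ(y)) for y ∉ {x_2,…,x_n}, and f(x_j) = 0 (this extension is differentiable with ∇f(x_j) = 0). Then there exist constants C_n > 0, depending only on K, Q, α, with C_n^{1/n} → 1 as n → ∞, such that for all n ≥ 2 and all choices x_2,…,x_n ∈ K, sup_{y ∈ K} |∇f(y)| ≤ C_n · sup_{y ∈ K} f(y). -/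

import Mathlib

open MeasureTheory Manifold Filter
open scoped Classical

/-- The Riesz-discretization function `f(y) = exp(-∑_j |y - x_j|^{-α} - 2nQ(y))` for
`y ∉ {x_2,…,x_n}`, extended by `0` at the points `x_j`. -/
noncomputable def rieszF {d : ℕ} (α : ℝ) (n : ℕ) (Q : EuclideanSpace ℝ (Fin d) → ℝ)
    (x : Fin (n - 1) → EuclideanSpace ℝ (Fin d)) (y : EuclideanSpace ℝ (Fin d)) : ℝ :=
  if y ∈ Set.range x then 0
  else Real.exp (-(∑ j, ‖y - x j‖ ^ (-α)) - 2 * (n : ℝ) * Q y)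

section AuxRiesz

lemma aux_exp_neg_le_inv {b : ℝ} (hb : 0 < b) : Real.exp (-b) ≤ b⁻¹ := by
  rw [Real.exp_neg]
  have h1 : b ≤ Real.exp b := by linarith [Real.add_one_le_exp b]
  exact inv_anti₀ hb h1

lemma aux_rpow_le_exp (p ε t : ℝ) (hp : 0 ≤ p) (hε : 0 < ε) (ht : 0 ≤ t) :
    t ^ p ≤ ((Nat.ceil p).factorial / ε ^ (Nat.ceil p) + 1) * Real.exp (ε * t) := by
  set k := Nat.ceil p with hk
  have hfac : (0:ℝ) < (k.factorial : ℝ) / ε ^ k :=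
    div_pos (by exact_mod_cast k.factorial_pos) (pow_pos hε k)
  have hexp1 : (1:ℝ) ≤ Real.exp (ε * t) := Real.one_le_exp (by positivity)
  rcases le_or_gt t 1 with h1 | h1
  · have : t ^ p ≤ 1 := Real.rpow_le_one ht h1 hp
    nlinarith
  · have htk : t ^ p ≤ t ^ (k:ℝ) :=
      Real.rpow_le_rpow_of_exponent_le h1.le (Nat.le_ceil p)
    have htk' : t ^ (k:ℝ) = t ^ k := Real.rpow_natCast t k
    have hkey : (ε * t) ^ k / (k.factorial : ℝ) ≤ Real.exp (ε * t) :=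
      Real.pow_div_factorial_le_exp (ε * t) (mul_nonneg hε.le ht) k
    have h2 : t ^ k ≤ (k.factorial : ℝ) / ε ^ k * Real.exp (ε * t) := by
      rw [mul_pow] at hkey
      rw [div_mul_eq_mul_div, le_div_iff₀ (pow_pos hε k)]
      rw [div_le_iff₀ (by exact_mod_cast k.factorial_pos : (0:ℝ) < (k.factorial:ℝ))] at hkey
      linarith [hkey]
    calc t ^ p ≤ t ^ (k:ℝ) := htk
      _ = t ^ k := htk'
      _ ≤ (k.factorial : ℝ) / ε ^ k * Real.exp (ε * t) := h2
      _ ≤ ((k.factorial : ℝ) / ε ^ k + 1) * Real.exp (ε * t) := by nlinarith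

lemma aux_hasFDerivAt_zero {E : Type*} [NormedAddCommGroup E] [NormedSpace ℝ E]
    {f : E → ℝ} {y : E} {α M : ℝ} (hα : 0 < α) (hM : 0 ≤ M)
    (h0 : f y = 0) (hnn : ∀ w, 0 ≤ f w)
    (hb : ∀ w, w ≠ y → ‖w - y‖ ≤ 1 → f w ≤ M * Real.exp (-‖w - y‖ ^ (-α))) :
    HasFDerivAt f (0 : E →L[ℝ] ℝ) y := by
  refine HasFDerivAt.of_isLittleO (Asymptotics.isLittleO_iff.mpr ?_)
  intro c hc
  set k : ℕ := Nat.ceil (2 / α) with hk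
  have hk1 : (1:ℕ) ≤ k := Nat.one_le_ceil_iff.mpr (by positivity)
  have hkα : 2 ≤ α * k := by
    have := Nat.le_ceil (2 / α)
    calc (2:ℝ) = α * (2 / α) := by field_simp
      _ ≤ α * k := by
        apply mul_le_mul_of_nonneg_left _ hα.le
        exact_mod_cast this
  set M₂ : ℝ := M * (k:ℝ) ^ k + 1 with hM₂
  have hM₂0 : 0 < M₂ := by positivity
  have hδ : 0 < min 1 (c / M₂) := lt_min one_pos (div_pos hc hM₂0)
  filter_upwards [Metric.ball_mem_nhds y hδ] with w hw
  rw [Metric.mem_ball, dist_eq_norm] at hw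
  simp only [h0, map_zero, ContinuousLinearMap.zero_apply, sub_zero]
  set t : ℝ := ‖w - y‖ with htdef
  have ht1 : t ≤ 1 := le_of_lt (lt_of_lt_of_le hw (min_le_left _ _))
  have htc : t ≤ c / M₂ := le_of_lt (lt_of_lt_of_le hw (min_le_right _ _))
  rcases eq_or_ne w y with rfl | hne
  · simp [h0]; positivity
  · have ht0 : 0 < t := by
      simpa [htdef, norm_pos_iff, sub_ne_zero] using hne
    have hbw := hb w hne ht1
    have htα : (0:ℝ) < t ^ (-α) := Real.rpow_pos_of_pos ht0 _
    have e1 : Real.exp (-t ^ (-α)) = Real.exp (-(t ^ (-α) / k)) ^ k := by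
      rw [← Real.exp_nat_mul]
      congr 1
      field_simp
    have e2 : Real.exp (-(t ^ (-α) / k)) ≤ (k:ℝ) * t ^ α := by
      have := aux_exp_neg_le_inv (b := t ^ (-α) / k) (by positivity)
      calc Real.exp (-(t ^ (-α) / k)) ≤ (t ^ (-α) / k)⁻¹ := this
        _ = (k:ℝ) * (t ^ (-α))⁻¹ := by rw [inv_div]; ring
        _ = (k:ℝ) * t ^ α := by rw [← Real.rpow_neg ht0.le, neg_neg]
    have e3 : Real.exp (-t ^ (-α)) ≤ ((k:ℝ) * t ^ α) ^ k := by
      rw [e1]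
      exact pow_le_pow_left₀ (Real.exp_nonneg _) e2 k
    have e4 : ((k:ℝ) * t ^ α) ^ k = (k:ℝ) ^ k * t ^ (α * k) := by
      rw [mul_pow]
      congr 1
      rw [← Real.rpow_natCast (t ^ α) k, ← Real.rpow_mul ht0.le]
    have e5 : t ^ (α * k) ≤ t ^ (2:ℝ) :=
      Real.rpow_le_rpow_of_exponent_ge ht0 ht1 hkα
    have e6 : t ^ (2:ℝ) = t * t := by
      rw [show (2:ℝ) = ((2:ℕ):ℝ) by norm_num, Real.rpow_natCast]; ring
    have : f w ≤ M * ((k:ℝ) ^ k * (t * t)) := by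
      calc f w ≤ M * Real.exp (-t ^ (-α)) := hbw
        _ ≤ M * (((k:ℝ)) ^ k * t ^ (α * k)) := by
            apply mul_le_mul_of_nonneg_left _ hM
            rw [← e4]; exact e3
        _ ≤ M * ((k:ℝ) ^ k * (t * t)) := by
            apply mul_le_mul_of_nonneg_left _ hM
            apply mul_le_mul_of_nonneg_left _ (by positivity)
            rw [← e6]; exact e5
    have hnorm : ‖f w‖ = f w := Real.norm_of_nonneg (hnn w)
    rw [hnorm]
    calc f w ≤ M * ((k:ℝ) ^ k * (t * t)) := this
      _ = (M * (k:ℝ) ^ k) * t * t := by ring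
      _ ≤ M₂ * (c / M₂) * t := by
          apply mul_le_mul_of_nonneg_right _ ht0.le
          apply mul_le_mul (by rw [hM₂]; linarith) htc ht0.le hM₂0.le
      _ = c * t := by field_simp

lemma aux_exists_far_point {X : Type*} [PseudoMetricSpace X] {C : Set X} (hC : IsPreconnected C)
    {z₀ z₁ : X} (h₀ : z₀ ∈ C) (h₁ : z₁ ∈ C) {ρ : ℝ} (hρ : 0 < ρ) {ι : Type*} [Fintype ι]
    (x : ι → X) (hcard : (Fintype.card ι : ℝ) * (2 * ρ) < dist z₀ z₁) :
    ∃ z ∈ C, ∀ j, ρ ≤ dist z (x j) := by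
  by_contra hcon
  push_neg at hcon
  set D := dist z₀ z₁ with hD
  have himg : Set.Icc (0:ℝ) D ⊆ (fun z => dist z z₀) '' C := by
    have hconn : IsPreconnected ((fun z => dist z z₀) '' C) :=
      hC.image _ ((continuous_id.dist continuous_const).continuousOn)
    have m0 : (0:ℝ) ∈ (fun z => dist z z₀) '' C := ⟨z₀, h₀, dist_self z₀⟩
    have mD : D ∈ (fun z => dist z z₀) '' C := ⟨z₁, h₁, dist_comm z₁ z₀⟩
    exact hconn.Icc_subset m0 mD
  have hcover : Set.Icc (0:ℝ) D ⊆ ⋃ j, Metric.ball (dist (x j) z₀) ρ := by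
    intro t ht
    obtain ⟨z, hzC, hzt⟩ := himg ht
    obtain ⟨j, hj⟩ := hcon z hzC
    refine Set.mem_iUnion.mpr ⟨j, ?_⟩
    rw [Metric.mem_ball, Real.dist_eq, ← hzt]
    calc |dist z z₀ - dist (x j) z₀| ≤ dist z (x j) := abs_dist_sub_le _ _ _
      _ < ρ := hj
  have hmeas : volume (Set.Icc (0:ℝ) D) ≤ ∑ j : ι, volume (Metric.ball (dist (x j) z₀) ρ) :=
    le_trans (measure_mono hcover) (measure_iUnion_fintype_le volume _)
  rw [Real.volume_Icc] at hmeas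
  have hball : ∀ j : ι, volume (Metric.ball (dist (x j) z₀) ρ) = ENNReal.ofReal (2 * ρ) :=
    fun j => Real.volume_ball _ _
  rw [Finset.sum_congr rfl (fun j _ => hball j), Finset.sum_const, Finset.card_univ,
    nsmul_eq_mul] at hmeas
  have hle : ENNReal.ofReal (D - 0) ≤ ENNReal.ofReal ((Fintype.card ι : ℝ) * (2 * ρ)) := by
    refine le_trans hmeas ?_
    rw [ENNReal.ofReal_mul (Nat.cast_nonneg _), ENNReal.ofReal_natCast]
  rw [ENNReal.ofReal_le_ofReal_iff (by positivity)] at hle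
  linarith

lemma aux_tendsto_pow_one_div {C : ℕ → ℝ} (h1 : ∀ n, 1 ≤ C n) {R : ℝ} (hR : 1 ≤ R) {p : ℕ}
    (hC : ∀ n : ℕ, 2 ≤ n → C n ≤ R * ((n:ℝ) + 1) ^ p) :
    Tendsto (fun n : ℕ => C n ^ ((1:ℝ) / (n:ℝ))) atTop (nhds 1) := by
  have hpos : ∀ n, 0 < C n := fun n => lt_of_lt_of_le one_pos (h1 n)
  have hlog0 : ∀ n, 0 ≤ Real.log (C n) := fun n => Real.log_nonneg (h1 n)
  have hu1 : Tendsto (fun n : ℕ => Real.log R / (n:ℝ)) atTop (nhds 0) :=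
    tendsto_const_div_atTop_nhds_zero_nat _
  have hu2 : Tendsto (fun n : ℕ => Real.log (n:ℝ) / (n:ℝ)) atTop (nhds 0) := by
    have h := Real.isLittleO_log_id_atTop.tendsto_div_nhds_zero
    exact h.comp tendsto_natCast_atTop_atTop
  have hu : Tendsto (fun n : ℕ => Real.log R / (n:ℝ) + (2*p) * (Real.log (n:ℝ) / (n:ℝ)))
      atTop (nhds 0) := by
    have := hu1.add (hu2.const_mul (2*p : ℝ))
    simpa using this
  have key : Tendsto (fun n : ℕ => Real.log (C n) / (n:ℝ)) atTop (nhds 0) := by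
    apply tendsto_of_tendsto_of_tendsto_of_le_of_le' tendsto_const_nhds hu
    · filter_upwards with n
      exact div_nonneg (hlog0 n) (Nat.cast_nonneg n)
    · filter_upwards [eventually_ge_atTop 2] with n hn
      have hn1 : (1:ℝ) ≤ (n:ℝ) := by exact_mod_cast le_trans one_le_two hn
      have hn0 : (0:ℝ) < (n:ℝ) := lt_of_lt_of_le one_pos hn1
      have hlogle : Real.log (C n) ≤ Real.log R + (p:ℝ) * (2 * Real.log (n:ℝ)) := by
        have h2 : Real.log (C n) ≤ Real.log (R * ((n:ℝ)+1)^p) :=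
          Real.log_le_log (hpos n) (hC n hn)
        rw [Real.log_mul (by linarith) (by positivity), Real.log_pow] at h2
        have h3 : Real.log ((n:ℝ)+1) ≤ 2 * Real.log (n:ℝ) := by
          have h4 : ((n:ℝ)+1) ≤ (n:ℝ)^2 := by
            have : (2:ℝ) ≤ (n:ℝ) := by exact_mod_cast hn
            nlinarith
          calc Real.log ((n:ℝ)+1) ≤ Real.log ((n:ℝ)^2) := Real.log_le_log (by positivity) h4
            _ = 2 * Real.log (n:ℝ) := by rw [Real.log_pow]; push_cast; ring
        nlinarith [hlog0 n]
      calc Real.log (C n) / (n:ℝ) ≤ (Real.log R + (p:ℝ) * (2 * Real.log (n:ℝ))) / (n:ℝ) := by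
            apply div_le_div_of_nonneg_right hlogle hn0.le |>.trans_eq rfl
        _ = Real.log R / (n:ℝ) + (2*p) * (Real.log (n:ℝ) / (n:ℝ)) := by ring
  have hexp : Tendsto (fun n : ℕ => Real.exp (Real.log (C n) / (n:ℝ))) atTop (nhds 1) := by
    have := (Real.continuous_exp.tendsto 0).comp key
    simpa [Function.comp_def] using this
  apply hexp.congr
  intro n
  rw [Real.rpow_def_of_pos (hpos n), mul_one_div]

end AuxRiesz
set_option maxHeartbeats 2000000 in
/-- Bernstein-type gradient estimate on the Riesz classes `P_n^Q`:
if `K ⊂ ℝ^d` is a compact smooth `m`-dimensional embedded submanifold (realized as the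
image of a smooth embedding `g` of a compact smooth `m`-manifold `M`) and `Q` is `C¹`,
then there are constants `C_n > 0` with `C_n^{1/n} → 1` such that
`sup_K |∇f| ≤ C_n · sup_K f` for every `f ∈ P_n^Q`. -/
theorem riesz_gradient_estimate {d m : ℕ} (hd : 2 ≤ d) (α : ℝ) (hα : 0 < α)
    (hαd : α ≤ (d : ℝ)) (hm : 1 ≤ m) (hmd : m ≤ d)
    (K : Set (EuclideanSpace ℝ (Fin d)))
    (M : Type) [TopologicalSpace M] [ChartedSpace (EuclideanSpace ℝ (Fin m)) M]
    [IsManifold (𝓡 m) (⊤ : ℕ∞) M] [CompactSpace M]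
    (g : M → EuclideanSpace ℝ (Fin d))
    (hg : ContMDiff (𝓡 m) 𝓘(ℝ, EuclideanSpace ℝ (Fin d)) (⊤ : ℕ∞) g)
    (hemb : Topology.IsEmbedding g)
    (himm : ∀ p : M, Function.Injective (mfderiv (𝓡 m) 𝓘(ℝ, EuclideanSpace ℝ (Fin d)) g p))
    (hK : K = Set.range g)
    (Q : EuclideanSpace ℝ (Fin d) → ℝ) (hQ : ContDiff ℝ 1 Q) :
    ∃ C : ℕ → ℝ, (∀ n, 0 < C n) ∧
      Tendsto (fun n : ℕ => C n ^ ((1 : ℝ) / (n : ℝ))) atTop (nhds 1) ∧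
      ∀ n : ℕ, 2 ≤ n → ∀ x : Fin (n - 1) → EuclideanSpace ℝ (Fin d),
        (∀ j, x j ∈ K) → ∀ y ∈ K,
          ‖gradient (rieszF α n Q x) y‖ ≤ C n * sSup (rieszF α n Q x '' K) := by
  rcases isEmpty_or_nonempty M with hME | hMne
  · refine ⟨fun _ => 1, fun _ => one_pos, ?_, ?_⟩
    · have h1 : ∀ n : ℕ, (1:ℝ) ^ ((1:ℝ)/(n:ℝ)) = 1 := fun n => Real.one_rpow _
      exact tendsto_const_nhds.congr (fun n => (h1 n).symm)
    · intro n hn x hx y hy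
      rw [hK, Set.range_eq_empty g] at hy
      exact absurd hy (Set.notMem_empty y)
  -- main case
  have hKcomp : IsCompact K := hK ▸ (isCompact_range hg.continuous)
  obtain ⟨MQ, hMQ0, hMQ⟩ : ∃ MQ : ℝ, 0 ≤ MQ ∧ ∀ w ∈ K, |Q w| ≤ MQ := by
    obtain ⟨b, hb⟩ := (hKcomp.image (continuous_abs.comp hQ.continuous)).bddAbove
    exact ⟨max b 0, le_max_right _ _,
      fun w hw => le_trans (hb ⟨w, hw, rfl⟩) (le_max_left _ _)⟩
  obtain ⟨L, hL0, hL⟩ : ∃ L : ℝ, 0 ≤ L ∧ ∀ w ∈ K, ‖fderiv ℝ Q w‖ ≤ L := by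
    obtain ⟨b, hb⟩ :=
      (hKcomp.image ((hQ.continuous_fderiv one_ne_zero).norm)).bddAbove
    exact ⟨max b 0, le_max_right _ _,
      fun w hw => le_trans (hb ⟨w, hw, rfl⟩) (le_max_left _ _)⟩
  obtain ⟨C₀, hC₀K, hC₀conn, z₀, z₁, hz₀, hz₁, hz01⟩ :
      ∃ C₀ : Set (EuclideanSpace ℝ (Fin d)), C₀ ⊆ K ∧ IsPreconnected C₀ ∧
        ∃ z₀ z₁, z₀ ∈ C₀ ∧ z₁ ∈ C₀ ∧ z₀ ≠ z₁ := by
    set p₀ : M := Classical.arbitrary M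
    set e := chartAt (EuclideanSpace ℝ (Fin m)) p₀ with he
    have hp₀e : p₀ ∈ e.source := mem_chart_source _ p₀
    have htgt : e p₀ ∈ e.target := e.map_source hp₀e
    obtain ⟨r, hr, hball⟩ := Metric.isOpen_iff.mp e.open_target _ htgt
    set w0 : EuclideanSpace ℝ (Fin m) :=
      EuclideanSpace.single (⟨0, by omega⟩ : Fin m) (1:ℝ) with hw0def
    have hw0 : ‖w0‖ = 1 := by
      rw [hw0def, EuclideanSpace.norm_single, norm_one]
    have hw0ne : w0 ≠ 0 := by
      intro h; rw [h, norm_zero] at hw0; norm_num at hw0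
    set u := e p₀ with hu
    set v := e p₀ + (r/2) • w0 with hv
    have hvmem : v ∈ Metric.ball (e p₀) r := by
      rw [Metric.mem_ball, dist_eq_norm, hv, add_sub_cancel_left, norm_smul, hw0]
      rw [Real.norm_eq_abs, abs_of_pos (by linarith : (0:ℝ) < r/2)]
      linarith
    have humem : u ∈ Metric.ball (e p₀) r := Metric.mem_ball_self hr
    have huv : u ≠ v := by
      rw [hu, hv, Ne, left_eq_add]
      exact smul_ne_zero (by linarith) hw0ne
    have hsymmcont : ContinuousOn e.symm (Metric.ball (e p₀) r) :=
      e.continuousOn_symm.mono hball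
    have hpre : IsPreconnected (e.symm '' Metric.ball (e p₀) r) :=
      ((convex_ball (e p₀) r).isPreconnected).image _ hsymmcont
    have hpre2 : IsPreconnected (g '' (e.symm '' Metric.ball (e p₀) r)) :=
      hpre.image _ hg.continuous.continuousOn
    refine ⟨g '' (e.symm '' Metric.ball (e p₀) r), ?_, hpre2,
      g (e.symm u), g (e.symm v), ⟨e.symm u, ⟨u, humem, rfl⟩, rfl⟩,
      ⟨e.symm v, ⟨v, hvmem, rfl⟩, rfl⟩, ?_⟩
    · rw [hK]
      rintro _ ⟨p, _, rfl⟩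
      exact Set.mem_range_self p
    · intro hgeq
      have h1 : e.symm u = e.symm v := hemb.injective hgeq
      have h2 : u = v := by
        have hu' : u ∈ e.symm.source := by rw [OpenPartialHomeomorph.symm_source]; exact hball humem
        have hv' : v ∈ e.symm.source := by rw [OpenPartialHomeomorph.symm_source]; exact hball hvmem
        exact e.symm.injOn hu' hv' h1
      exact huv h2
  set D : ℝ := dist z₀ z₁ with hDdef
  have hD : 0 < D := dist_pos.mpr hz01
  have hfar : ∀ n : ℕ, 2 ≤ n → ∀ x : Fin (n-1) → EuclideanSpace ℝ (Fin d),
      ∃ z ∈ K, ∀ j, D / (4*(n:ℝ)) ≤ dist z (x j) := by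
    intro n hn x
    have hn0 : (0:ℝ) < (n:ℝ) := by
      have : (0:ℕ) < n := lt_of_lt_of_le two_pos hn
      exact_mod_cast this
    have hρ : 0 < D / (4*(n:ℝ)) := by positivity
    have hcard : (Fintype.card (Fin (n-1)) : ℝ) * (2 * (D/(4*(n:ℝ)))) < dist z₀ z₁ := by
      rw [Fintype.card_fin]
      have h1 : ((n-1:ℕ):ℝ) ≤ (n:ℝ) := by exact_mod_cast Nat.sub_le n 1
      have h3 : ((n-1:ℕ):ℝ) * (2*(D/(4*(n:ℝ)))) ≤ (n:ℝ) * (2*(D/(4*(n:ℝ)))) :=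
        mul_le_mul_of_nonneg_right h1 (by positivity)
      have h2 : (n:ℝ) * (2*(D/(4*(n:ℝ)))) = D/2 := by field_simp; ring
      rw [← hDdef]
      calc ((n-1:ℕ):ℝ) * (2*(D/(4*(n:ℝ)))) ≤ D/2 := by rw [← h2]; exact h3
        _ < D := by linarith
    obtain ⟨z, hzC, hz⟩ := aux_exists_far_point hC₀conn hz₀ hz₁ hρ x hcard
    exact ⟨z, hC₀K hzC, hz⟩
  -- the constants
  set q : ℕ := Nat.ceil α + 2 with hq
  set k₁ : ℕ := Nat.ceil ((α+1)/α) with hk₁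
  set A : ℝ := 1 + (4/D)^α + MQ with hA
  have h4D : (0:ℝ) ≤ (4/D)^α := Real.rpow_nonneg (by positivity) _
  have hA1 : 1 ≤ A := by rw [hA]; linarith
  have hA0 : 0 < A := lt_of_lt_of_le one_pos hA1
  set X : ℕ → ℝ := fun n => ((n:ℝ)+1)^q * A with hX
  have hX1 : ∀ n : ℕ, 1 ≤ X n := by
    intro n
    have h1 : (1:ℝ) ≤ ((n:ℝ)+1)^q := one_le_pow₀ (by have h0 : (0:ℝ) ≤ (n:ℝ) := Nat.cast_nonneg n; linarith)
    show (1:ℝ) ≤ ((n:ℝ)+1)^q * A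
    nlinarith
  have hX0 : ∀ n : ℕ, 0 < X n := fun n => lt_of_lt_of_le one_pos (hX1 n)
  set εf : ℕ → ℝ := fun n => 1 / X n with hεf
  have hεpos : ∀ n, 0 < εf n := fun n => by
    show (0:ℝ) < 1 / X n
    exact div_pos one_pos (hX0 n)
  have hεle1 : ∀ n, εf n ≤ 1 := fun n => by
    show (1:ℝ) / X n ≤ 1
    rw [div_le_one (hX0 n)]; exact hX1 n
  set Bf : ℕ → ℝ := fun n => (k₁.factorial : ℝ) / (εf n)^k₁ + 1 with hBf
  have hB1 : ∀ n, 1 ≤ Bf n := by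
    intro n
    have h1 : (0:ℝ) ≤ (k₁.factorial : ℝ) / (εf n)^k₁ :=
      div_nonneg (Nat.cast_nonneg _) (pow_nonneg (hεpos n).le _)
    show (1:ℝ) ≤ (k₁.factorial : ℝ) / (εf n)^k₁ + 1
    linarith
  set ρf : ℕ → ℝ := fun n => D / (4*(n:ℝ)) with hρf
  set En : ℕ → ℝ := fun n =>
    εf n * (((n-1:ℕ):ℝ) * (ρf n)^(-α) + 2*(n:ℝ)*MQ) + 2*(n:ℝ)*(εf n)*MQ with hEn
  have hρnn : ∀ n : ℕ, 0 ≤ ρf n := fun n => by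
    show (0:ℝ) ≤ D / (4*(n:ℝ))
    positivity
  have hEn0 : ∀ n, 0 ≤ En n := by
    intro n
    have h1 : (0:ℝ) ≤ (ρf n)^(-α) := Real.rpow_nonneg (hρnn n) _
    have h2 : (0:ℝ) ≤ ((n-1:ℕ):ℝ) := Nat.cast_nonneg _
    have h3 : (0:ℝ) ≤ (n:ℝ) := Nat.cast_nonneg _
    have h4 := (hεpos n).le
    show (0:ℝ) ≤ εf n * (((n-1:ℕ):ℝ) * (ρf n)^(-α) + 2*(n:ℝ)*MQ) + 2*(n:ℝ)*(εf n)*MQ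
    have t1 : (0:ℝ) ≤ ((n-1:ℕ):ℝ) * (ρf n)^(-α) := mul_nonneg h2 h1
    have t2 : (0:ℝ) ≤ 2*(n:ℝ)*MQ := by positivity
    have t3 : (0:ℝ) ≤ 2*(n:ℝ)*(εf n)*MQ := by
      apply mul_nonneg (mul_nonneg (by positivity) h4) hMQ0
    nlinarith
  set Cf : ℕ → ℝ := fun n => α * Bf n * (n:ℝ) * Real.exp (En n) + 2*(n:ℝ)*L + 1 with hCf
  have hC1 : ∀ n, 1 ≤ Cf n := by
    intro n
    have h1 : (0:ℝ) ≤ α * Bf n * (n:ℝ) * Real.exp (En n) := by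
      apply mul_nonneg (mul_nonneg (mul_nonneg hα.le (le_trans zero_le_one (hB1 n))) (Nat.cast_nonneg n)) (Real.exp_nonneg _)
    have h2 : (0:ℝ) ≤ 2*(n:ℝ)*L := by positivity
    show (1:ℝ) ≤ α * Bf n * (n:ℝ) * Real.exp (En n) + 2*(n:ℝ)*L + 1
    linarith
  refine ⟨Cf, fun n => lt_of_lt_of_le one_pos (hC1 n), ?_, ?_⟩
  · -- Tendsto
    set R : ℝ := α * ((k₁.factorial:ℝ)+1) * A^k₁ * Real.exp 3 + 2*L + 1 with hR
    have hR1 : 1 ≤ R := by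
      have h1 : (0:ℝ) ≤ α * ((k₁.factorial:ℝ)+1) * A^k₁ * Real.exp 3 := by positivity
      have h2 : (0:ℝ) ≤ 2*L := by linarith
      rw [hR]; linarith
    apply aux_tendsto_pow_one_div hC1 hR1 (p := q*k₁+1)
    intro n hn
    have hn0 : (0:ℝ) < (n:ℝ) := by
      have : (0:ℕ) < n := lt_of_lt_of_le two_pos hn
      exact_mod_cast this
    have hnp1 : (1:ℝ) ≤ (n:ℝ)+1 := by linarith
    have hρval : (ρf n)^(-α) ≤ ((n:ℝ)+1)^α * (4/D)^α := by
      have h1 : (ρf n)^(-α) = (4*(n:ℝ)/D)^α := by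
        show (D/(4*(n:ℝ)))^(-α) = _
        rw [Real.rpow_neg (by positivity), ← Real.inv_rpow (by positivity), inv_div]
      rw [h1]
      have h2 : 4*(n:ℝ)/D ≤ ((n:ℝ)+1) * (4/D) := by
        have h3 : 4*(n:ℝ)/D = (n:ℝ)*(4/D) := by ring
        rw [h3]
        apply mul_le_mul_of_nonneg_right (by linarith) (by positivity)
      calc (4*(n:ℝ)/D)^α ≤ (((n:ℝ)+1)*(4/D))^α := Real.rpow_le_rpow (by positivity) h2 hα.le
        _ = ((n:ℝ)+1)^α * (4/D)^α := Real.mul_rpow (by linarith) (by positivity)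
    have hεXle : ∀ Y : ℝ, Y ≤ X n → εf n * Y ≤ 1 := by
      intro Y hY
      have hε' : εf n = 1/X n := rfl
      calc εf n * Y ≤ εf n * X n := by
            apply mul_le_mul_of_nonneg_left hY (hεpos n).le
        _ = 1 := by rw [hε', one_div_mul_cancel (hX0 n).ne']
    have hterm1 : εf n * (((n-1:ℕ):ℝ) * (ρf n)^(-α)) ≤ 1 := by
      apply hεXle
      have hc1 : ((n-1:ℕ):ℝ) ≤ (n:ℝ)+1 := by
        have h5 : ((n-1:ℕ):ℝ) ≤ (n:ℝ) := by exact_mod_cast Nat.sub_le n 1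
        linarith
      calc ((n-1:ℕ):ℝ) * (ρf n)^(-α) ≤ ((n:ℝ)+1) * (((n:ℝ)+1)^α * (4/D)^α) := by
            apply mul_le_mul hc1 hρval (Real.rpow_nonneg (hρnn n) _) (by linarith)
        _ = (((n:ℝ)+1) * ((n:ℝ)+1)^α) * (4/D)^α := by ring
        _ ≤ ((n:ℝ)+1)^q * A := by
            have hb1 : ((n:ℝ)+1) * ((n:ℝ)+1)^α = ((n:ℝ)+1)^((1:ℝ)+α) := by
              rw [Real.rpow_add (by linarith : (0:ℝ) < (n:ℝ)+1), Real.rpow_one]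
            have hb2 : ((n:ℝ)+1)^((1:ℝ)+α) ≤ ((n:ℝ)+1)^((q:ℕ):ℝ) := by
              apply Real.rpow_le_rpow_of_exponent_le hnp1
              have hcl := Nat.le_ceil α
              rw [hq]; push_cast; linarith
            have hb3 : ((n:ℝ)+1)^((q:ℕ):ℝ) = ((n:ℝ)+1)^q := Real.rpow_natCast _ _
            have hb4 : (4/D)^α ≤ A := by rw [hA]; linarith
            rw [hb1]
            apply mul_le_mul (by rw [← hb3]; exact hb2) hb4 h4D (by positivity)
        _ = X n := rfl
    have h2nq : 2*(n:ℝ) ≤ ((n:ℝ)+1)^q := by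
      have hq2 : ((n:ℝ)+1)^2 ≤ ((n:ℝ)+1)^q := pow_le_pow_right₀ hnp1 (by rw [hq]; omega)
      nlinarith
    have hterm2 : εf n * (2*(n:ℝ)*MQ) ≤ 1 := by
      apply hεXle
      calc 2*(n:ℝ)*MQ ≤ ((n:ℝ)+1)^q * MQ := mul_le_mul_of_nonneg_right h2nq hMQ0
        _ ≤ ((n:ℝ)+1)^q * A := by
            apply mul_le_mul_of_nonneg_left (by rw [hA]; linarith) (by positivity)
        _ = X n := rfl
    have hEn3 : En n ≤ 3 := by
      have hEneq : En n = εf n * (((n-1:ℕ):ℝ) * (ρf n)^(-α) + 2*(n:ℝ)*MQ) + 2*(n:ℝ)*(εf n)*MQ := rfl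
      have heq2 : 2*(n:ℝ)*(εf n)*MQ = εf n * (2*(n:ℝ)*MQ) := by ring
      rw [hEneq, mul_add, heq2]
      linarith
    have hBle : Bf n ≤ ((k₁.factorial:ℝ)+1) * (X n)^k₁ := by
      have h1 : (εf n)^k₁ = 1/(X n)^k₁ := by
        show ((1:ℝ)/X n)^k₁ = _
        rw [div_pow, one_pow]
      have h2 : (k₁.factorial:ℝ)/(εf n)^k₁ = (k₁.factorial:ℝ) * (X n)^k₁ := by
        rw [h1]; field_simp
      have h3 : (1:ℝ) ≤ (X n)^k₁ := one_le_pow₀ (hX1 n)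
      have h4 : (0:ℝ) ≤ (k₁.factorial:ℝ) := Nat.cast_nonneg _
      show (k₁.factorial:ℝ)/(εf n)^k₁ + 1 ≤ ((k₁.factorial:ℝ)+1) * (X n)^k₁
      rw [h2]
      nlinarith
    have hXpow : (X n)^k₁ = ((n:ℝ)+1)^(q*k₁) * A^k₁ := by
      show (((n:ℝ)+1)^q * A)^k₁ = _
      rw [mul_pow, ← pow_mul]
    have hXk0 : (0:ℝ) ≤ ((k₁.factorial:ℝ)+1) * (X n)^k₁ := by
      apply mul_nonneg (by positivity) (pow_nonneg (hX0 n).le _)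
    have step1 : α * Bf n ≤ α * (((k₁.factorial:ℝ)+1) * (X n)^k₁) :=
      mul_le_mul_of_nonneg_left hBle hα.le
    have step2 : α * Bf n * (n:ℝ) ≤ α * (((k₁.factorial:ℝ)+1) * (X n)^k₁) * ((n:ℝ)+1) := by
      apply mul_le_mul step1 (by linarith) (Nat.cast_nonneg n) (mul_nonneg hα.le hXk0)
    have hBf0 : (0:ℝ) ≤ Bf n := le_trans zero_le_one (hB1 n)
    have step3 : α * Bf n * (n:ℝ) * Real.exp (En n) ≤
        α * (((k₁.factorial:ℝ)+1) * (X n)^k₁) * ((n:ℝ)+1) * Real.exp 3 := by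
      apply mul_le_mul step2 (Real.exp_le_exp.mpr hEn3) (Real.exp_nonneg _)
      apply mul_nonneg (mul_nonneg hα.le hXk0) (by linarith)
    set P : ℝ := ((n:ℝ)+1)^(q*k₁+1) with hP
    have hP1 : (1:ℝ) ≤ P := one_le_pow₀ hnp1
    have hPn : (n:ℝ) ≤ P := by
      have : ((n:ℝ)+1) ≤ P := le_self_pow₀ hnp1 (by omega)
      linarith
    have hfin : α * (((k₁.factorial:ℝ)+1) * (X n)^k₁) * ((n:ℝ)+1) * Real.exp 3 =
        (α * ((k₁.factorial:ℝ)+1) * A^k₁ * Real.exp 3) * P := by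
      rw [hXpow, hP, pow_succ]
      ring
    have ha0 : (0:ℝ) ≤ α * ((k₁.factorial:ℝ)+1) * A^k₁ * Real.exp 3 := by positivity
    calc Cf n = α * Bf n * (n:ℝ) * Real.exp (En n) + 2*(n:ℝ)*L + 1 := rfl
      _ ≤ (α * ((k₁.factorial:ℝ)+1) * A^k₁ * Real.exp 3) * P + 2*(n:ℝ)*L + 1 := by
          rw [← hfin]; linarith
      _ ≤ R * P := by
          rw [hR]
          have hprod : (0:ℝ) ≤ (P - (n:ℝ)) * L := mul_nonneg (by linarith) hL0
          nlinarith
  · -- main bound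
    intro n hn x hx y hy
    have hn0 : (0:ℝ) < (n:ℝ) := by
      have h : (0:ℕ) < n := lt_of_lt_of_le two_pos hn
      exact_mod_cast h
    have hα' : α ≠ 0 := ne_of_gt hα
    set f := rieszF α n Q x with hfdef
    set S := sSup (f '' K) with hSdef
    have hfval0 : ∀ w, w ∈ Set.range x → f w = 0 := by
      intro w hw; rw [hfdef]; simp only [rieszF]; rw [if_pos hw]
    have hfvale : ∀ w, w ∉ Set.range x →
        f w = Real.exp (-(∑ l, ‖w - x l‖^(-α)) - 2*(n:ℝ)*Q w) := by
      intro w hw; rw [hfdef]; simp only [rieszF]; rw [if_neg hw]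
    have hfpos : ∀ w, 0 ≤ f w := by
      intro w
      by_cases hw : w ∈ Set.range x
      · rw [hfval0 w hw]
      · rw [hfvale w hw]; exact (Real.exp_pos _).le
    have hsumnn : ∀ w : EuclideanSpace ℝ (Fin d), 0 ≤ ∑ l, ‖w - x l‖^(-α) :=
      fun w => Finset.sum_nonneg (fun l _ => Real.rpow_nonneg (norm_nonneg _) _)
    have hbdd : BddAbove (f '' K) := by
      refine ⟨Real.exp (2*(n:ℝ)*MQ), ?_⟩
      rintro _ ⟨w, hw, rfl⟩
      by_cases hwr : w ∈ Set.range x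
      · rw [hfval0 w hwr]; exact (Real.exp_nonneg _)
      · rw [hfvale w hwr]
        apply Real.exp_le_exp.mpr
        have h1 := hsumnn w
        have h2 := (abs_le.mp (hMQ w hw)).1
        have h3 : 2*(n:ℝ)*(-MQ) ≤ 2*(n:ℝ)*Q w :=
          mul_le_mul_of_nonneg_left (by linarith) (by positivity)
        linarith
    have hfleS : ∀ w ∈ K, f w ≤ S := fun w hw => le_csSup hbdd ⟨w, hw, rfl⟩
    obtain ⟨z, hzK, hz⟩ := hfar n hn x
    have hρpos : 0 < ρf n := by
      show (0:ℝ) < D/(4*(n:ℝ)); positivity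
    have hzran : z ∉ Set.range x := by
      rintro ⟨j, hj⟩
      have h1 := hz j
      rw [hj, dist_self] at h1
      have h2 : (0:ℝ) < D/(4*(n:ℝ)) := by positivity
      linarith
    set σ : ℝ := Real.exp (-(((n-1:ℕ):ℝ) * (ρf n)^(-α)) - 2*(n:ℝ)*MQ) with hσ
    have hσS : σ ≤ S := by
      have hfz : σ ≤ f z := by
        rw [hfvale z hzran, hσ]
        apply Real.exp_le_exp.mpr
        have hsum : ∑ l, ‖z - x l‖^(-α) ≤ ((n-1:ℕ):ℝ) * (ρf n)^(-α) := by
          calc ∑ l, ‖z - x l‖^(-α) ≤ ∑ _l : Fin (n-1), (ρf n)^(-α) := by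
                apply Finset.sum_le_sum
                intro l _
                have hd1 : ρf n ≤ ‖z - x l‖ := by
                  show D/(4*(n:ℝ)) ≤ ‖z - x l‖
                  rw [← dist_eq_norm]; exact hz l
                rw [Real.rpow_neg (norm_nonneg _), Real.rpow_neg hρpos.le]
                exact inv_anti₀ (Real.rpow_pos_of_pos hρpos _)
                  (Real.rpow_le_rpow hρpos.le hd1 hα.le)
            _ = ((n-1:ℕ):ℝ) * (ρf n)^(-α) := by
                rw [Finset.sum_const, Finset.card_univ, Fintype.card_fin, nsmul_eq_mul]
        have hQz := (abs_le.mp (hMQ z hzK)).2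
        have h3 : 2*(n:ℝ)*Q z ≤ 2*(n:ℝ)*MQ :=
          mul_le_mul_of_nonneg_left hQz (by positivity)
        linarith
      exact le_trans hfz (hfleS z hzK)
    have hS0 : 0 < S := lt_of_lt_of_le (Real.exp_pos _) hσS
    have hlogS : -(((n-1:ℕ):ℝ) * (ρf n)^(-α)) - 2*(n:ℝ)*MQ ≤ Real.log S := by
      have h1 := Real.log_le_log (Real.exp_pos _) hσS
      rwa [Real.log_exp] at h1
    by_cases hyr : y ∈ Set.range x
    · -- y is one of the points: gradient vanishes
      obtain ⟨MQ₁, hMQ₁0, hMQ₁⟩ : ∃ MQ₁ : ℝ, 0 ≤ MQ₁ ∧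
          ∀ w ∈ Metric.closedBall y 1, |Q w| ≤ MQ₁ := by
        obtain ⟨b, hb⟩ :=
          ((isCompact_closedBall y 1).image (continuous_abs.comp hQ.continuous)).bddAbove
        exact ⟨max b 0, le_max_right _ _,
          fun w hw => le_trans (hb ⟨w, hw, rfl⟩) (le_max_left _ _)⟩
      obtain ⟨j₀, hj₀⟩ := hyr
      have hb : ∀ w, w ≠ y → ‖w - y‖ ≤ 1 →
          f w ≤ Real.exp (2*(n:ℝ)*MQ₁) * Real.exp (-‖w - y‖^(-α)) := by
        intro w hwy hw1
        by_cases hwr : w ∈ Set.range x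
        · rw [hfval0 w hwr]; positivity
        · rw [hfvale w hwr, ← Real.exp_add]
          apply Real.exp_le_exp.mpr
          have h1 : ‖w - x j₀‖^(-α) ≤ ∑ l, ‖w - x l‖^(-α) :=
            Finset.single_le_sum (f := fun l => ‖w - x l‖ ^ (-α))
              (fun l _ => Real.rpow_nonneg (norm_nonneg _) _) (Finset.mem_univ j₀)
          rw [hj₀] at h1
          have h2 := (abs_le.mp (hMQ₁ w (by rw [Metric.mem_closedBall, dist_eq_norm]; exact hw1))).1
          have h3 : 2*(n:ℝ)*(-MQ₁) ≤ 2*(n:ℝ)*Q w :=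
            mul_le_mul_of_nonneg_left (by linarith) (by positivity)
          linarith
      have h0 : f y = 0 := hfval0 y ⟨j₀, hj₀⟩
      have hder : HasFDerivAt f (0 : EuclideanSpace ℝ (Fin d) →L[ℝ] ℝ) y :=
        aux_hasFDerivAt_zero hα (Real.exp_nonneg _) h0 hfpos hb
      have hgrad0 : gradient f y = 0 := by
        have hfd : fderiv ℝ f y = 0 := hder.fderiv
        show (InnerProductSpace.toDual ℝ (EuclideanSpace ℝ (Fin d))).symm (fderiv ℝ f y) = 0
        rw [hfd, map_zero]
      rw [hgrad0, norm_zero]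
      have h4 := hC1 n
      exact mul_nonneg (by linarith) hS0.le
    · -- y is not one of the points: compute the derivative
      have hyne : ∀ j, y ≠ x j := fun j h => hyr ⟨j, h.symm⟩
      have hr : ∀ j, (0:ℝ) < ‖y - x j‖ :=
        fun j => norm_pos_iff.mpr (sub_ne_zero.mpr (hyne j))
      have hνdiff : ∀ j, DifferentiableAt ℝ (fun w : EuclideanSpace ℝ (Fin d) => ‖w - x j‖) y := by
        intro j
        have h1 : DifferentiableAt ℝ (fun w : EuclideanSpace ℝ (Fin d) => w - x j) y :=
          (differentiableAt_id.sub (differentiableAt_const _))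
        exact h1.norm ℝ (sub_ne_zero.mpr (hyne j))
      set N : Fin (n-1) → (EuclideanSpace ℝ (Fin d) →L[ℝ] ℝ) :=
        fun j => fderiv ℝ (fun w => ‖w - x j‖) y with hN
      have hNder : ∀ j, HasFDerivAt (fun w : EuclideanSpace ℝ (Fin d) => ‖w - x j‖) (N j) y :=
        fun j => (hνdiff j).hasFDerivAt
      have hlip : ∀ j, LipschitzWith 1 (fun w : EuclideanSpace ℝ (Fin d) => ‖w - x j‖) := by
        intro j
        apply LipschitzWith.of_dist_le_mul
        intro a b
        rw [Real.dist_eq, NNReal.coe_one, one_mul, dist_eq_norm]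
        calc |‖a - x j‖ - ‖b - x j‖| ≤ ‖(a - x j) - (b - x j)‖ := abs_norm_sub_norm_le _ _
          _ = ‖a - b‖ := by rw [sub_sub_sub_cancel_right]
      have hNle : ∀ j, ‖N j‖ ≤ 1 := by
        intro j
        have h1 := (hNder j).le_of_lipschitz (hlip j)
        simpa using h1
      have hsder : ∀ j, HasFDerivAt (fun w : EuclideanSpace ℝ (Fin d) => ‖w - x j‖ ^ (-α))
          (((-α) * ‖y - x j‖ ^ (-α - 1)) • N j) y := by
        intro j
        have hφ : HasDerivAt (fun t : ℝ => t ^ (-α)) ((-α) * ‖y - x j‖ ^ (-α - 1)) (‖y - x j‖) :=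
          Real.hasDerivAt_rpow_const (Or.inl (hr j).ne')
        exact hφ.comp_hasFDerivAt y (hNder j)
      have hQdiff : HasFDerivAt Q (fderiv ℝ Q y) y :=
        ((hQ.differentiable one_ne_zero) y).hasFDerivAt
      set G' : EuclideanSpace ℝ (Fin d) →L[ℝ] ℝ :=
        -(∑ j, ((-α) * ‖y - x j‖ ^ (-α - 1)) • N j) - (2*(n:ℝ)) • (fderiv ℝ Q y) with hG'
      have hGder : HasFDerivAt
          (fun w : EuclideanSpace ℝ (Fin d) => -(∑ l, ‖w - x l‖ ^ (-α)) - 2*(n:ℝ)*Q w) G' y :=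
        ((HasFDerivAt.fun_sum (fun j _ => hsder j)).neg).sub (hQdiff.const_mul (2*(n:ℝ)))
      set GG : ℝ := -(∑ l, ‖y - x l‖ ^ (-α)) - 2*(n:ℝ)*Q y with hGG
      have hFder : HasFDerivAt
          (fun w : EuclideanSpace ℝ (Fin d) =>
            Real.exp (-(∑ l, ‖w - x l‖ ^ (-α)) - 2*(n:ℝ)*Q w))
          (Real.exp GG • G') y :=
        (Real.hasDerivAt_exp GG).comp_hasFDerivAt (f := fun w : EuclideanSpace ℝ (Fin d) =>
          -(∑ l, ‖w - x l‖ ^ (-α)) - 2*(n:ℝ)*Q w) y hGder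
      have hopen : IsOpen {w : EuclideanSpace ℝ (Fin d) | w ∉ Set.range x} :=
        (Set.finite_range x).isClosed.isOpen_compl
      have hmem : {w : EuclideanSpace ℝ (Fin d) | w ∉ Set.range x} ∈ nhds y := hopen.mem_nhds hyr
      have heq : f =ᶠ[nhds y] (fun w : EuclideanSpace ℝ (Fin d) =>
          Real.exp (-(∑ l, ‖w - x l‖ ^ (-α)) - 2*(n:ℝ)*Q w)) :=
        Filter.eventually_of_mem hmem (fun w hw => hfvale w hw)
      have hfder : HasFDerivAt f (Real.exp GG • G') y := hFder.congr_of_eventuallyEq heq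
      have hgr : ‖gradient f y‖ ≤ Real.exp GG * ‖G'‖ := by
        have h1 : ‖gradient f y‖ = ‖fderiv ℝ f y‖ := by
          show ‖(InnerProductSpace.toDual ℝ (EuclideanSpace ℝ (Fin d))).symm (fderiv ℝ f y)‖ = _
          exact LinearIsometryEquiv.norm_map _ _
        rw [h1, hfder.fderiv]
        refine le_trans (ContinuousLinearMap.opNorm_smul_le _ _) ?_
        rw [Real.norm_eq_abs, abs_of_pos (Real.exp_pos _)]
      have hG'le : ‖G'‖ ≤ (∑ j, α * ‖y - x j‖ ^ (-α - 1)) + 2*(n:ℝ)*L := by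
        rw [hG']
        calc ‖-(∑ j, ((-α) * ‖y - x j‖ ^ (-α-1)) • N j) - (2*(n:ℝ)) • (fderiv ℝ Q y)‖
            ≤ ‖-(∑ j, ((-α) * ‖y - x j‖ ^ (-α-1)) • N j)‖ + ‖(2*(n:ℝ)) • (fderiv ℝ Q y)‖ :=
              norm_sub_le _ _
          _ ≤ (∑ j, α * ‖y - x j‖ ^ (-α-1)) + 2*(n:ℝ)*L := by
              apply add_le_add
              · rw [norm_neg]
                refine le_trans (norm_sum_le _ _) (Finset.sum_le_sum ?_)
                intro j _
                refine le_trans (ContinuousLinearMap.opNorm_smul_le _ _) ?_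
                rw [Real.norm_eq_abs]
                have h2 : |(-α) * ‖y - x j‖^(-α-1)| = α * ‖y - x j‖^(-α-1) := by
                  rw [abs_mul, abs_neg, abs_of_pos hα,
                    abs_of_nonneg (Real.rpow_nonneg (norm_nonneg _) _)]
                rw [h2]
                calc α * ‖y - x j‖^(-α-1) * ‖N j‖ ≤ α * ‖y - x j‖^(-α-1) * 1 := by
                      apply mul_le_mul_of_nonneg_left (hNle j)
                        (mul_nonneg hα.le (Real.rpow_nonneg (norm_nonneg _) _))
                  _ = α * ‖y - x j‖^(-α-1) := mul_one _
              · refine le_trans (ContinuousLinearMap.opNorm_smul_le _ _) ?_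
                rw [Real.norm_eq_abs, abs_of_nonneg (by positivity : (0:ℝ) ≤ 2*(n:ℝ))]
                exact mul_le_mul_of_nonneg_left (hL y hy) (by positivity)
      have hfyS : Real.exp GG ≤ S := by
        have h1 := hfvale y hyr
        rw [← hGG] at h1
        rw [← h1]
        exact hfleS y hy
      have hGGlog : GG ≤ Real.log S := by
        have h2 := Real.log_le_log (Real.exp_pos GG) hfyS
        rwa [Real.log_exp] at h2
      set T : ℝ := ∑ l, ‖y - x l‖ ^ (-α) with hT
      have hterm : ∀ j : Fin (n-1), Real.exp GG * (α * ‖y - x j‖ ^ (-α-1)) ≤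
          α * (Bf n * (S * Real.exp (En n))) := by
        intro j
        set s : ℝ := ‖y - x j‖ ^ (-α) with hs
        have hs0 : 0 ≤ s := Real.rpow_nonneg (norm_nonneg _) _
        have h1 : ‖y - x j‖ ^ (-α-1) = s ^ ((α+1)/α) := by
          rw [hs, ← Real.rpow_mul (norm_nonneg _)]
          congr 1
          field_simp
          ring
        have h2 : s ^ ((α+1)/α) ≤ Bf n * Real.exp (εf n * s) := by
          have h3 := aux_rpow_le_exp ((α+1)/α) (εf n) s (by positivity) (hεpos n) hs0
          exact h3
        have hsT : s ≤ T := by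
          rw [hs, hT]
          exact Finset.single_le_sum (f := fun l => ‖y - x l‖ ^ (-α))
            (fun l _ => Real.rpow_nonneg (norm_nonneg _) _) (Finset.mem_univ j)
        have hkey : εf n * s + GG ≤ Real.log S + En n := by
          have hGGeq : GG = -T - 2*(n:ℝ)*Q y := hGG
          have hQy1 := (abs_le.mp (hMQ y hy)).1
          have e1 : εf n * s ≤ εf n * T := mul_le_mul_of_nonneg_left hsT (hεpos n).le
          have e2 : (1 - εf n) * (-T - 2*(n:ℝ)*Q y) ≤ (1 - εf n) * Real.log S := by
            apply mul_le_mul_of_nonneg_left _ (by linarith [hεle1 n])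
            rw [← hGGeq]; exact hGGlog
          have e3 : εf n * (2*(n:ℝ)*(-Q y)) ≤ εf n * (2*(n:ℝ)*MQ) := by
            apply mul_le_mul_of_nonneg_left _ (hεpos n).le
            apply mul_le_mul_of_nonneg_left (by linarith) (by positivity)
          have e4 : εf n * (-Real.log S) ≤
              εf n * (((n-1:ℕ):ℝ) * (ρf n)^(-α) + 2*(n:ℝ)*MQ) := by
            apply mul_le_mul_of_nonneg_left _ (hεpos n).le
            linarith [hlogS]
          have hEneq : En n =
              εf n * (((n-1:ℕ):ℝ) * (ρf n)^(-α) + 2*(n:ℝ)*MQ) + 2*(n:ℝ)*(εf n)*MQ := rfl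
          rw [hGGeq, hEneq]
          nlinarith [e1, e2, e3, e4]
        have h3 : Real.exp (εf n * s) * Real.exp GG ≤ S * Real.exp (En n) := by
          rw [← Real.exp_add]
          calc Real.exp (εf n * s + GG) ≤ Real.exp (Real.log S + En n) :=
              Real.exp_le_exp.mpr hkey
            _ = S * Real.exp (En n) := by rw [Real.exp_add, Real.exp_log hS0]
        calc Real.exp GG * (α * ‖y - x j‖ ^ (-α-1))
            = α * (‖y - x j‖^(-α-1) * Real.exp GG) := by ring
          _ ≤ α * ((Bf n * Real.exp (εf n * s)) * Real.exp GG) := by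
              apply mul_le_mul_of_nonneg_left _ hα.le
              apply mul_le_mul_of_nonneg_right _ (Real.exp_nonneg _)
              rw [h1]; exact h2
          _ = α * (Bf n * (Real.exp (εf n * s) * Real.exp GG)) := by ring
          _ ≤ α * (Bf n * (S * Real.exp (En n))) := by
              apply mul_le_mul_of_nonneg_left _ hα.le
              apply mul_le_mul_of_nonneg_left h3 (le_trans zero_le_one (hB1 n))
      have hcast : ((n-1:ℕ):ℝ) ≤ (n:ℝ) := by exact_mod_cast Nat.sub_le n 1
      calc ‖gradient f y‖ ≤ Real.exp GG * ‖G'‖ := hgr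
        _ ≤ Real.exp GG * ((∑ j, α * ‖y - x j‖ ^ (-α-1)) + 2*(n:ℝ)*L) :=
            mul_le_mul_of_nonneg_left hG'le (Real.exp_nonneg _)
        _ = (∑ j, Real.exp GG * (α * ‖y - x j‖ ^ (-α-1))) + Real.exp GG * (2*(n:ℝ)*L) := by
            rw [mul_add, Finset.mul_sum]
        _ ≤ (∑ _j : Fin (n-1), α * (Bf n * (S * Real.exp (En n)))) + S * (2*(n:ℝ)*L) := by
            apply add_le_add (Finset.sum_le_sum (fun j _ => hterm j))
            apply mul_le_mul_of_nonneg_right hfyS (by positivity)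
        _ = ((n-1:ℕ):ℝ) * (α * (Bf n * (S * Real.exp (En n)))) + S * (2*(n:ℝ)*L) := by
            rw [Finset.sum_const, Finset.card_univ, Fintype.card_fin, nsmul_eq_mul]
        _ ≤ (n:ℝ) * (α * (Bf n * (S * Real.exp (En n)))) + S * (2*(n:ℝ)*L) := by
            apply add_le_add_left
            apply mul_le_mul_of_nonneg_right hcast
            have hBf0 : (0:ℝ) ≤ Bf n := le_trans zero_le_one (hB1 n)
            exact mul_nonneg hα.le (mul_nonneg hBf0 (mul_nonneg hS0.le (Real.exp_nonneg _)))
        _ ≤ Cf n * S := by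
            have hCfeq : Cf n = α * Bf n * (n:ℝ) * Real.exp (En n) + 2*(n:ℝ)*L + 1 := rfl
            rw [hCfeq]
            nlinarith [hS0.le]
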